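/- For a compact interval I contained in the open interval (-beta/2, beta/2), a band-limited integrable function f with supp(f-hat) subset of I, and a function g in the Feichtinger algebra S_0(R) with g-hat = 1 on I and supp(g-hat) contained in [-beta/2, beta/2], setting alpha = 1/beta one has the reconstruction formula f(t) = alpha · sum_{k in Z} f(alpha k) g(t - alpha k) for all t in R. -/

import Mathlib

open MeasureTheory Filter

/-- The Fourier transform on the real line, `F f (s) = ∫ f(t) e^{-2πi s t} dt`. -/
noncomputable def fourier1 (f : ℝ → ℂ) (s : ℝ) : ℂ :=
  ∫ t, f t * Complex.exp (-(2 * Real.pi * Complex.I * (s * t)))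

section aux
open Real Complex FourierTransform Set

lemma fourier1_eq (f : ℝ → ℂ) : fourier1 f = 𝓕 f := by
  funext s
  rw [fourier1, Real.fourier_eq']
  refine integral_congr_ae (Filter.Eventually.of_forall fun t => ?_)
  simp only [smul_eq_mul, RCLike.inner_apply, conj_trivial]
  rw [mul_comm]
  congr 1
  push_cast
  ring

lemma fourier_inv_formula {φ : ℝ → ℂ} (hc : Continuous φ) (hi : Integrable φ)
    (hfi : Integrable (𝓕 φ)) (x : ℝ) :
    ∫ ξ : ℝ, 𝓕 φ ξ * Complex.exp (2 * π * ξ * x * Complex.I) = φ x := by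
  have h := hi.fourierInv_fourier_eq hfi hc.continuousAt (v := x)
  rw [Real.fourierInv_eq'] at h
  rw [← h]
  refine integral_congr_ae (Filter.Eventually.of_forall fun ξ => ?_)
  simp only [smul_eq_mul, RCLike.inner_apply, conj_trivial]
  rw [mul_comm]
  congr 1
  push_cast
  ring

lemma continuous_F {f : ℝ → ℂ} (hfi : Integrable f) : Continuous (𝓕 f) :=
  VectorFourier.fourierIntegral_continuous Real.continuous_fourierChar
    (by exact continuous_inner) hfi

lemma norm_F_le (f : ℝ → ℂ) (s : ℝ) : ‖𝓕 f s‖ ≤ ∫ t, ‖f t‖ :=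
  VectorFourier.norm_fourierIntegral_le_integral_norm _ _ _ _ _

lemma measurable_liftIoc {β a : ℝ} [hβ : Fact (0 < β)] {Φ : ℝ → ℂ} (h : Measurable Φ) :
    Measurable (AddCircle.liftIoc β a Φ) := by
  have : AddCircle.liftIoc β a Φ =
      (Φ ∘ (Subtype.val : Set.Ioc a (a+β) → ℝ)) ∘ (AddCircle.measurableEquivIoc β a) := rfl
  rw [this]
  exact (h.comp measurable_subtype_coe).comp (AddCircle.measurableEquivIoc β a).measurable

lemma norm_liftIoc_le {β a : ℝ} [hβ : Fact (0 < β)] {Φ : ℝ → ℂ} {C : ℝ}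
    (h : ∀ x, ‖Φ x‖ ≤ C) (z : AddCircle β) : ‖AddCircle.liftIoc β a Φ z‖ ≤ C := h _

lemma coeff_lift_eq {β : ℝ} [hβ : Fact (0 < β)] (Φ : ℝ → ℂ) (n : ℤ) :
    fourierCoeff (AddCircle.liftIoc β (-(β/2)) Φ) n
      = (β : ℂ)⁻¹ * ∫ x in Set.Ioc (-(β/2)) (β/2),
          Complex.exp (2 * π * Complex.I * (-n) * x / β) * Φ x := by
  rw [fourierCoeff_eq_intervalIntegral _ n (-(β/2))]
  have hb : 0 < β := hβ.out
  have he : -(β/2) + β = β/2 := by ring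
  rw [intervalIntegral.integral_of_le (by linarith), he]
  have : ∫ x in Set.Ioc (-(β/2)) (β/2),
        (fourier (-n)) (x : AddCircle β) • AddCircle.liftIoc β (-(β/2)) Φ x
      = ∫ x in Set.Ioc (-(β/2)) (β/2),
        Complex.exp (2 * π * Complex.I * (-n) * x / β) * Φ x := by
    refine setIntegral_congr_fun measurableSet_Ioc fun x hx => ?_
    have hx' : x ∈ Set.Ioc (-(β/2)) (-(β/2)+β) := by rwa [he]
    simp only [smul_eq_mul]
    rw [AddCircle.liftIoc_coe_apply hx', fourier_coe_apply]
    push_cast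
    ring_nf
  rw [this, Complex.real_smul]
  push_cast
  rw [one_div]

lemma fourierCoeff_congr_ae' {T : ℝ} [Fact (0 < T)] {f g : AddCircle T → ℂ} {n : ℤ}
    (h : f =ᵐ[AddCircle.haarAddCircle] g) : fourierCoeff f n = fourierCoeff g n := by
  rw [fourierCoeff, fourierCoeff]
  refine integral_congr_ae ?_
  filter_upwards [h] with x hx
  rw [hx]

end aux

open Real Complex FourierTransform Set in
/-- Shannon's sampling theorem with oversampling: if `f ∈ B¹_I` is band-limited to a compact
set `I ⊆ (-β/2, β/2)` and `g` is integrable with integrable Fourier transform satisfying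
`ĝ = 1` on `I` and `ĝ = 0` outside `[-β/2, β/2]`, then with `α = β⁻¹` one has
`f(t) = α ∑_{k ∈ ℤ} f(αk) g(t - αk)` for all `t`. -/
theorem shannon_sampling_oversampled
    (β : ℝ) (hβ : 0 < β) (I : Set ℝ) (hI : IsCompact I)
    (hII : I ⊆ Set.Ioo (-(β / 2)) (β / 2))
    (f : ℝ → ℂ) (hfc : Continuous f) (hfi : Integrable f)
    (hf0 : Tendsto f (cocompact ℝ) (nhds 0))
    (hfband : ∀ s, s ∉ I → fourier1 f s = 0)
    (g : ℝ → ℂ) (hgc : Continuous g) (hgi : Integrable g)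
    (hgfi : Integrable (fourier1 g))
    (hg1 : ∀ s ∈ I, fourier1 g s = 1)
    (hg0 : ∀ s : ℝ, β / 2 < |s| → fourier1 g s = 0) :
    ∀ t : ℝ, f t = β⁻¹ * ∑' k : ℤ, f (β⁻¹ * k) * g (t - β⁻¹ * k) := by
  intro t
  haveI : Fact (0 < β) := ⟨hβ⟩
  rw [fourier1_eq] at hfband hgfi hg1 hg0
  -- the Fourier transform of f is continuous with compact support, hence integrable
  have hFc : Continuous (𝓕 f) := continuous_F hfi
  have hFcs : HasCompactSupport (𝓕 f) := HasCompactSupport.intro hI hfband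
  have hFi : Integrable (𝓕 f) := hFc.integrable_of_hasCompactSupport hFcs
  have hGc : Continuous (𝓕 g) := continuous_F hgi
  have inv_f := fourier_inv_formula hfc hfi hFi
  have inv_g := fourier_inv_formula hgc hgi hgfi
  -- the two relevant functions on the circle
  set G : ℝ → ℂ := fun ξ => 𝓕 g ξ * Complex.exp (2 * π * ξ * t * Complex.I) with hG
  set u0 : AddCircle β → ℂ :=
    AddCircle.liftIoc β (-(β/2)) (fun x => (starRingEnd ℂ) (𝓕 f x)) with hu0
  set v0 : AddCircle β → ℂ := AddCircle.liftIoc β (-(β/2)) G with hv0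
  -- membership in L²
  have hu_meas : Measurable u0 :=
    measurable_liftIoc ((Complex.continuous_conj.comp hFc).measurable)
  have hv_meas : Measurable v0 :=
    measurable_liftIoc (hGc.mul (by continuity)).measurable
  have hexp1 : ∀ x : ℝ, ‖Complex.exp (2 * (π:ℂ) * x * t * Complex.I)‖ = 1 := by
    intro x
    have : (2 * (π:ℂ) * x * t * Complex.I) = ((2 * π * x * t : ℝ) : ℂ) * Complex.I := by
      push_cast; ring
    rw [this, Complex.norm_exp_ofReal_mul_I]
  have hu2 : MemLp u0 2 AddCircle.haarAddCircle := by
    refine (memLp_top_of_bound hu_meas.aestronglyMeasurable (∫ s, ‖f s‖)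
      (ae_of_all _ (norm_liftIoc_le fun x => ?_))).mono_exponent le_top
    rw [RCLike.norm_conj]
    exact norm_F_le f x
  have hv2 : MemLp v0 2 AddCircle.haarAddCircle := by
    refine (memLp_top_of_bound hv_meas.aestronglyMeasurable (∫ s, ‖g s‖)
      (ae_of_all _ (norm_liftIoc_le fun x => ?_))).mono_exponent le_top
    simp only [hG]
    rw [norm_mul, hexp1, mul_one]
    exact norm_F_le g x
  set U : Lp ℂ 2 AddCircle.haarAddCircle := hu2.toLp u0 with hU
  set V : Lp ℂ 2 AddCircle.haarAddCircle := hv2.toLp v0 with hV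
  -- computation of the Fourier coefficients of u0
  have hcu : ∀ n : ℤ, (starRingEnd ℂ) (fourierCoeff u0 n)
      = (β : ℂ)⁻¹ * f (β⁻¹ * n) := by
    intro n
    rw [hu0, coeff_lift_eq, map_mul, ← integral_conj]
    have h1 : ∀ x : ℝ, (starRingEnd ℂ) (Complex.exp (2 * π * Complex.I * (-n) * x / β)
          * (starRingEnd ℂ) (𝓕 f x))
        = 𝓕 f x * Complex.exp (2 * π * x * ((β⁻¹ * (n:ℝ) : ℝ) : ℂ) * Complex.I) := by
      intro x
      rw [map_mul, Complex.conj_conj, ← Complex.exp_conj, mul_comm]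
      congr 1
      simp only [map_div₀, map_mul, Complex.conj_I, Complex.conj_ofReal, map_neg, map_intCast,
        map_ofNat]
      push_cast
      field_simp
    simp_rw [h1]
    rw [setIntegral_eq_integral_of_forall_compl_eq_zero
      (fun x hx => by rw [hfband x (fun hxI => hx (Set.Ioo_subset_Ioc_self (hII hxI))),
        zero_mul]),
      inv_f (β⁻¹ * n)]
    simp [Complex.conj_ofReal]
  -- computation of the Fourier coefficients of v0
  have hcv : ∀ n : ℤ, fourierCoeff v0 n = (β : ℂ)⁻¹ * g (t - β⁻¹ * n) := by
    intro n
    rw [hv0, coeff_lift_eq]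
    have h1 : ∀ x : ℝ, Complex.exp (2 * π * Complex.I * (-n) * x / β) * G x
        = 𝓕 g x * Complex.exp (2 * π * x * ((t - β⁻¹ * (n:ℝ) : ℝ) : ℂ) * Complex.I) := by
      intro x
      simp only [hG]
      rw [mul_comm, mul_assoc, ← Complex.exp_add]
      congr 1
      push_cast
      field_simp
      ring
    simp_rw [h1]
    have h0 : ∀ᵐ x : ℝ, x ∉ Set.Ioc (-(β/2)) (β/2) →
        𝓕 g x * Complex.exp (2 * π * x * ((t - β⁻¹ * (n:ℝ) : ℝ) : ℂ) * Complex.I) = 0 := by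
      have hae : ∀ᵐ x : ℝ, x ≠ -(β/2) := by
        rw [ae_iff]
        simpa using Real.volume_singleton
      filter_upwards [hae] with x hx hx2
      have : β / 2 < |x| := by
        rw [Set.mem_Ioc, not_and_or, not_lt, not_le] at hx2
        rw [lt_abs]
        rcases hx2 with h | h
        · right
          have := lt_of_le_of_ne h hx
          linarith
        · left
          exact h
      rw [hg0 x this, zero_mul]
    rw [setIntegral_eq_integral_of_ae_compl_eq_zero h0, inv_g (t - β⁻¹ * n)]
  -- the inner product of U and V equals β⁻¹ f t
  have hUV : (inner ℂ U V : ℂ) = (β : ℂ)⁻¹ * f t := by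
    rw [MeasureTheory.L2.inner_def]
    have hpt : ∀ z, (inner ℂ (u0 z) (v0 z) : ℂ)
        = AddCircle.liftIoc β (-(β/2)) (fun x => 𝓕 f x * G x) z := by
      intro z
      simp only [RCLike.inner_apply, hu0, hv0, AddCircle.liftIoc, Function.comp_apply,
        Set.restrict_apply, Complex.conj_conj]
      exact mul_comm _ _
    have : ∫ z, (inner ℂ (U z) (V z) : ℂ) ∂AddCircle.haarAddCircle
        = fourierCoeff (AddCircle.liftIoc β (-(β/2)) (fun x => 𝓕 f x * G x)) 0 := by
      rw [fourierCoeff]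
      refine integral_congr_ae ?_
      filter_upwards [hu2.coeFn_toLp, hv2.coeFn_toLp] with z h1 h2
      rw [neg_zero, _root_.fourier_zero, one_smul, ← hpt z, hU, hV, h1, h2]
    rw [this, coeff_lift_eq]
    have h2 : ∀ x : ℝ, Complex.exp (2 * π * Complex.I * (-(0:ℤ)) * x / β) * (𝓕 f x * G x)
        = 𝓕 f x * Complex.exp (2 * π * x * (t:ℂ) * Complex.I) := by
      intro x
      by_cases hxI : x ∈ I
      · simp only [hG]
        rw [hg1 x hxI]
        push_cast
        ring_nf
        rw [Complex.exp_zero]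
        ring
      · rw [hfband x hxI, zero_mul, mul_zero, zero_mul]
    simp_rw [h2]
    rw [setIntegral_eq_integral_of_forall_compl_eq_zero
      (fun x hx => by rw [hfband x (fun hxI => hx (Set.Ioo_subset_Ioc_self (hII hxI))),
        zero_mul]),
      inv_f t]
  -- Parseval
  have key := HilbertBasis.tsum_inner_mul_inner (fourierBasis (T := β)) U V
  have hrep : ∀ (W : Lp ℂ 2 (AddCircle.haarAddCircle (T := β))) (n : ℤ),
      (inner ℂ ((fourierBasis (T := β)) n) W : ℂ) = fourierCoeff (W : AddCircle β → ℂ) n := by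
    intro W n
    rw [← fourierBasis_repr, HilbertBasis.repr_apply_apply]
  have hcU : ∀ n : ℤ, fourierCoeff (U : AddCircle β → ℂ) n = fourierCoeff u0 n :=
    fun n => fourierCoeff_congr_ae' (hu2.coeFn_toLp)
  have hcV : ∀ n : ℤ, fourierCoeff (V : AddCircle β → ℂ) n = fourierCoeff v0 n :=
    fun n => fourierCoeff_congr_ae' (hv2.coeFn_toLp)
  have key2 : ∑' n : ℤ, ((β:ℂ)⁻¹ * f (β⁻¹ * n)) * ((β:ℂ)⁻¹ * g (t - β⁻¹ * n))
      = (β : ℂ)⁻¹ * f t := by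
    rw [← hUV, ← key]
    refine tsum_congr fun n => ?_
    rw [← inner_conj_symm U ((fourierBasis (T := β)) n), hrep U n, hrep V n, hcU, hcV, hcu, hcv]
  have h3 : ∀ n : ℤ, ((β:ℂ)⁻¹ * f (β⁻¹ * n)) * ((β:ℂ)⁻¹ * g (t - β⁻¹ * n))
      = (β:ℂ)⁻¹ * ((β:ℂ)⁻¹ * (f (β⁻¹ * n) * g (t - β⁻¹ * n))) := fun n => by ring
  simp_rw [h3] at key2
  rw [tsum_mul_left, tsum_mul_left] at key2
  have hβc : ((β:ℂ))⁻¹ ≠ 0 := by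
    simp [Complex.ofReal_ne_zero.mpr hβ.ne']
  have := mul_left_cancel₀ hβc key2
  rw [← this]
  push_cast
  ring
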